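/- Let u, w ∈ W with a directed edge u → w = us_β in the quantum Bruhat graph, and let j ∈ I. If w⁻¹α_j is a negative root and u⁻¹α_j is a positive root, then the edge u → w is a Bruhat edge, β = u⁻¹α_j, and w = s_j u. -/

import Mathlib

/-- An axiomatized finite crystallographic root system datum, with weight/root
space `V` over `ℚ`, simple roots `α i`, an invariant inner product `B`,
Weyl group `W` acting faithfully on `V`, and the set of roots `isRoot`. -/
structure RootSystemData (I : Type) [Fintype I] [DecidableEq I] where
  V : Type
  [instAddCommGroup : AddCommGroup V]
  [instModule : Module ℚ V]
  W : Type
  [instGroup : Group W]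
  α : I → V
  B : V →ₗ[ℚ] V →ₗ[ℚ] ℚ
  toLin : W →* Module.End ℚ V
  s : I → W
  isRoot : V → Prop
  B_symm : ∀ x y, B x y = B y x
  B_pos : ∀ β, isRoot β → 0 < B β β
  B_inv : ∀ (w : W) (x y : V), B (toLin w x) (toLin w y) = B x y
  root_simple : ∀ i, isRoot (α i)
  root_inv : ∀ (w : W) (β : V), isRoot β → isRoot (toLin w β)
  root_gen : ∀ β, isRoot β → ∃ (w : W) (i : I), β = toLin w (α i)
  root_finite : (setOf isRoot).Finite
  indep : LinearIndependent ℚ α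
  s_act : ∀ i x, toLin (s i) x = x - (2 * B (α i) x / B (α i) (α i)) • α i
  gen : Subgroup.closure (Set.range s) = ⊤
  faithful : Function.Injective toLin
  root_int : ∀ β, isRoot β → ∃ c : I → ℤ, β = ∑ i, (c i : ℚ) • α i
  pos_or_neg : ∀ β, isRoot β →
    (∃ c : I → ℕ, β = ∑ i, (c i : ℚ) • α i) ∨ (∃ c : I → ℕ, -β = ∑ i, (c i : ℚ) • α i)

attribute [instance] RootSystemData.instAddCommGroup RootSystemData.instModule
  RootSystemData.instGroup

namespace RootSystemData

variable {I : Type} [Fintype I] [DecidableEq I] (R : RootSystemData I)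

/-- `β` is a positive root. -/
def IsPos (β : R.V) : Prop :=
  R.isRoot β ∧ ∃ c : I → ℕ, β = ∑ i, (c i : ℚ) • R.α i

/-- The finite set of positive roots. -/
noncomputable def posFinset : Finset R.V :=
  (Set.Finite.subset R.root_finite (fun _ hb => hb.1) : (setOf R.IsPos).Finite).toFinset

/-- Half the sum of the positive roots. -/
noncomputable def ρ : R.V := (2 : ℚ)⁻¹ • ∑ β ∈ R.posFinset, β

/-- The pairing `⟨x, β∨⟩` of `x` with the coroot of `β`. -/
noncomputable def coroot (β x : R.V) : ℚ := 2 * R.B β x / R.B β β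

open Classical in
/-- The reflection `s_β ∈ W` in a root `β`. -/
noncomputable def refl (β : R.V) : R.W :=
  if h : R.isRoot β then
    (R.root_gen β h).choose * R.s (R.root_gen β h).choose_spec.choose *
      (R.root_gen β h).choose⁻¹
  else 1

/-- The length function on the Weyl group. -/
noncomputable def len (w : R.W) : ℕ :=
  sInf {n | ∃ l : List I, l.length = n ∧ (l.map R.s).prod = w}

/-- Bruhat order: generated by multiplication by reflections which increases length. -/
def bruhatLE : R.W → R.W → Prop :=
  Relation.ReflTransGen (fun u v => (∃ β, R.IsPos β ∧ v = R.refl β * u) ∧ R.len u < R.len v)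

def bruhatLT (u v : R.W) : Prop := R.bruhatLE u v ∧ u ≠ v

/-- The parabolic subgroup `W_J`. -/
def WJ (J : Set I) : Subgroup R.W := Subgroup.closure (R.s '' J)

/-- `w` is a minimal-length representative of its coset `w W_J`. -/
def IsMinRep (J : Set I) (w : R.W) : Prop :=
  ∀ z ∈ R.WJ J, R.len w ≤ R.len (w * z)

/-- `β ∈ Δ⁺_J`: positive roots in the span of the simple roots indexed by `J`. -/
def posJ (J : Set I) (β : R.V) : Prop :=
  R.IsPos β ∧ β ∈ Submodule.span ℚ (R.α '' J)

/-- A Bruhat edge `x → x s_β` in the quantum Bruhat graph. -/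
def BruhatEdge (x : R.W) (β : R.V) : Prop :=
  R.IsPos β ∧ R.len (x * R.refl β) = R.len x + 1

/-- A quantum edge `x → x s_β` in the quantum Bruhat graph. -/
def QuantumEdge (x : R.W) (β : R.V) : Prop :=
  R.IsPos β ∧ (R.len (x * R.refl β) : ℚ) = R.len x + 1 - 2 * R.coroot β R.ρ

/-- An edge of the quantum Bruhat graph. -/
def QBGEdge (x : R.W) (β : R.V) : Prop := R.BruhatEdge x β ∨ R.QuantumEdge x β

/-- A quantum root: `ℓ(s_β) = 2⟨ρ, β∨⟩ - 1`. -/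
def IsQuantumRoot (β : R.V) : Prop :=
  R.IsPos β ∧ (R.len (R.refl β) : ℚ) = 2 * R.coroot β R.ρ - 1

/-- A long root (maximal squared length); in simply-laced type all roots are long. -/
def IsLong (β : R.V) : Prop :=
  R.isRoot β ∧ ∀ γ, R.isRoot γ → R.B γ γ ≤ R.B β β

/-- A short root. -/
def IsShort (β : R.V) : Prop := R.isRoot β ∧ ¬ R.IsLong β

def IsSimplyLaced : Prop :=
  ∀ β γ, R.isRoot β → R.isRoot γ → R.B β β = R.B γ γ

def IsIrreducible : Prop :=
  Nonempty I ∧ ∀ J : Set I,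
    (∀ i ∈ J, ∀ j ∉ J, R.B (R.α i) (R.α j) = 0) → J = ∅ ∨ J = Set.univ

/-- `θ` is the highest root. -/
def IsHighestRoot (θ : R.V) : Prop :=
  R.IsPos θ ∧ ∀ β, R.IsPos β → ∃ c : I → ℕ, θ - β = ∑ i, (c i : ℚ) • R.α i

/-- `ϖ` is the fundamental weight associated to `k`. -/
def IsFundamental (k : I) (ϖ : R.V) : Prop :=
  ∀ i, R.coroot (R.α i) ϖ = if i = k then 1 else 0

/-- `ϖ` is minuscule. -/
def IsMinuscule (ϖ : R.V) : Prop :=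
  ∀ β, R.isRoot β → R.coroot β ϖ ∈ ({-1, 0, 1} : Set ℚ)

/-- A strict total order on `Δ⁺` which is a reflection (convex) order. -/
def IsReflectionOrder (lt : R.V → R.V → Prop) : Prop :=
  (∀ β, ¬ lt β β) ∧ (∀ a b c, lt a b → lt b c → lt a c) ∧
  (∀ β γ, R.IsPos β → R.IsPos γ → β ≠ γ → lt β γ ∨ lt γ β) ∧
  (∀ β γ, R.IsPos β → R.IsPos γ → R.IsPos (β + γ) →
    (lt β (β + γ) ∧ lt (β + γ) γ) ∨ (lt γ (β + γ) ∧ lt (β + γ) β))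

end RootSystemData

open RootSystemData in
/-- A directed path in the quantum Bruhat graph with the given list of labels. -/
def QBGPath {I : Type} [Fintype I] [DecidableEq I] (R : RootSystemData I) :
    R.W → List R.V → R.W → Prop
  | x, [], y => x = y
  | x, β :: l, y => R.QBGEdge x β ∧ QBGPath R (x * R.refl β) l y

open RootSystemData in
/-- A directed path in the Bruhat graph (Bruhat edges only). -/
def BGPath {I : Type} [Fintype I] [DecidableEq I] (R : RootSystemData I) :
    R.W → List R.V → R.W → Prop
  | x, [], y => x = y
  | x, β :: l, y => R.BruhatEdge x β ∧ BGPath R (x * R.refl β) l y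

/-- The Cartan pairing `⟨α_j, α_i∨⟩` of type `B_n` (Bourbaki labelling, shifted
to be 0-based: the short simple root is the last one, index `n-1`). -/
def BCartan (n : ℕ) (i j : Fin n) : ℚ :=
  if i = j then 2
  else if (i : ℕ) = n - 1 ∧ (j : ℕ) + 1 = n - 1 then -2
  else if ((i : ℕ) + 1 = j ∨ (j : ℕ) + 1 = i) then -1
  else 0

/-- `R` is of type `B_n` (via the identification `e` of its index set with `Fin n`). -/
def IsTypeB {I : Type} [Fintype I] [DecidableEq I] (R : RootSystemData I)
    (n : ℕ) (e : I ≃ Fin n) : Prop :=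
  2 ≤ n ∧ ∀ i j, R.coroot (R.α i) (R.α j) = BCartan n (e i) (e j)

/-- The product `s_{a+1} s_{a+2} ⋯ s_{b+1}` (0-based: indices `a, a+1, …, b`). -/
noncomputable def sSeq {n : ℕ} (hn : 0 < n) (R : RootSystemData (Fin n)) (a b : ℕ) : R.W :=
  ((List.range (b + 1 - a)).map (fun t => R.s ⟨(a + t) % n, Nat.mod_lt _ hn⟩)).prod

/-- The sum `α_{a+1} + ⋯ + α_b` of simple roots (0-based half-open interval `[a, b)`). -/
def aSum {n : ℕ} (hn : 0 < n) (R : RootSystemData (Fin n)) (a b : ℕ) : R.V :=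
  ∑ t ∈ Finset.Ico a b, R.α ⟨t % n, Nat.mod_lt _ hn⟩

namespace RootSystemData

variable {I : Type} [Fintype I] [DecidableEq I] (R : RootSystemData I)

lemma toLin_mul_apply (a b : R.W) (x : R.V) :
    R.toLin (a * b) x = R.toLin a (R.toLin b x) := by
  rw [map_mul]; rfl

lemma toLin_one_apply (x : R.V) : R.toLin 1 x = x := by
  rw [map_one]; rfl

lemma toLin_inv_cancel (v : R.W) (x : R.V) : R.toLin v⁻¹ (R.toLin v x) = x := by
  rw [← R.toLin_mul_apply, inv_mul_cancel, R.toLin_one_apply]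

lemma toLin_cancel_inv (v : R.W) (x : R.V) : R.toLin v (R.toLin v⁻¹ x) = x := by
  rw [← R.toLin_mul_apply, mul_inv_cancel, R.toLin_one_apply]

lemma toLin_injective (v : R.W) : Function.Injective (R.toLin v) :=
  Function.LeftInverse.injective (R.toLin_inv_cancel v)

lemma B_self_ne_zero {β : R.V} (hβ : R.isRoot β) : R.B β β ≠ 0 :=
  ne_of_gt (R.B_pos β hβ)

lemma root_ne_zero {β : R.V} (hβ : R.isRoot β) : β ≠ 0 := by
  intro h
  have := R.B_pos β hβ
  rw [h] at this
  simp at this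

lemma coroot_self {β : R.V} (hβ : R.isRoot β) : R.coroot β β = 2 := by
  have := R.B_self_ne_zero hβ
  rw [coroot]; field_simp

lemma coroot_smul_right (β : R.V) (c : ℚ) (x : R.V) :
    R.coroot β (c • x) = c * R.coroot β x := by
  simp [coroot, map_smul, smul_eq_mul]; ring

lemma coroot_add_right (β : R.V) (x y : R.V) :
    R.coroot β (x + y) = R.coroot β x + R.coroot β y := by
  simp [coroot, map_add]; ring

lemma coroot_sub_right (β : R.V) (x y : R.V) :
    R.coroot β (x - y) = R.coroot β x - R.coroot β y := by
  simp [coroot, map_sub]; ring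

lemma coroot_neg_right (β : R.V) (x : R.V) :
    R.coroot β (-x) = -R.coroot β x := by
  simp [coroot, map_neg]; ring

lemma coroot_sum (β : R.V) {γ : Type*} (F : Finset γ) (v : γ → R.V) :
    R.coroot β (∑ g ∈ F, v g) = ∑ g ∈ F, R.coroot β (v g) := by
  simp only [coroot, map_sum, LinearMap.coe_sum, Finset.sum_apply, Finset.mul_sum,
    Finset.sum_div]

lemma coroot_toLin (v : R.W) (β x : R.V) :
    R.coroot (R.toLin v β) x = R.coroot β (R.toLin v⁻¹ x) := by
  unfold coroot
  rw [show R.B (R.toLin v β) x = R.B (R.toLin v β) (R.toLin v (R.toLin v⁻¹ x)) by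
    rw [R.toLin_cancel_inv], R.B_inv, R.B_inv]

lemma s_apply (i : I) (x : R.V) :
    R.toLin (R.s i) x = x - R.coroot (R.α i) x • R.α i := R.s_act i x

lemma s_s_apply (i : I) (x : R.V) : R.toLin (R.s i) (R.toLin (R.s i) x) = x := by
  have h2 := R.coroot_self (R.root_simple i)
  rw [R.s_apply, R.s_apply, R.coroot_sub_right, R.coroot_smul_right, h2]
  module

lemma s_mul_s (i : I) : R.s i * R.s i = 1 := by
  apply R.faithful
  rw [map_one]
  apply LinearMap.ext
  intro x
  rw [R.toLin_mul_apply, R.s_s_apply]; rfl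

lemma s_inv (i : I) : (R.s i)⁻¹ = R.s i :=
  inv_eq_of_mul_eq_one_right (R.s_mul_s i)

lemma s_apply_self (i : I) : R.toLin (R.s i) (R.α i) = -(R.α i) := by
  rw [R.s_apply, R.coroot_self (R.root_simple i)]
  module

/-- The generic reflection formula for conjugates of simple reflections. -/
lemma conj_s_apply (v : R.W) (i : I) (x : R.V) :
    R.toLin (v * R.s i * v⁻¹) x
      = x - R.coroot (R.toLin v (R.α i)) x • R.toLin v (R.α i) := by
  rw [R.toLin_mul_apply, R.toLin_mul_apply, R.s_apply, map_sub, map_smul,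
    R.toLin_cancel_inv, R.coroot_toLin]

lemma toLin_refl {β : R.V} (hβ : R.isRoot β) (x : R.V) :
    R.toLin (R.refl β) x = x - R.coroot β x • β := by
  rw [refl, dif_pos hβ]
  have hspec : β = R.toLin (R.root_gen β hβ).choose
      (R.α (R.root_gen β hβ).choose_spec.choose) :=
    (R.root_gen β hβ).choose_spec.choose_spec
  rw [R.conj_s_apply, ← hspec]

lemma toLin_refl_self {β : R.V} (hβ : R.isRoot β) : R.toLin (R.refl β) β = -β := by
  rw [R.toLin_refl hβ, R.coroot_self hβ]; module

lemma refl_refl_apply {β : R.V} (hβ : R.isRoot β) (x : R.V) :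
    R.toLin (R.refl β) (R.toLin (R.refl β) x) = x := by
  rw [R.toLin_refl hβ, R.toLin_refl hβ, R.coroot_sub_right, R.coroot_smul_right,
    R.coroot_self hβ]
  module

lemma refl_mul_refl {β : R.V} (hβ : R.isRoot β) : R.refl β * R.refl β = 1 := by
  apply R.faithful
  rw [map_one]
  apply LinearMap.ext
  intro x
  rw [R.toLin_mul_apply, R.refl_refl_apply hβ]; rfl

lemma refl_inv {β : R.V} (hβ : R.isRoot β) : (R.refl β)⁻¹ = R.refl β :=
  inv_eq_of_mul_eq_one_right (R.refl_mul_refl hβ)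

lemma refl_simple (i : I) : R.refl (R.α i) = R.s i := by
  apply R.faithful
  apply LinearMap.ext
  intro x
  rw [R.toLin_refl (R.root_simple i), R.s_apply]

lemma refl_conj {β : R.V} (hβ : R.isRoot β) (v : R.W) :
    v * R.refl β * v⁻¹ = R.refl (R.toLin v β) := by
  apply R.faithful
  apply LinearMap.ext
  intro x
  rw [R.toLin_refl (R.root_inv v β hβ), R.toLin_mul_apply, R.toLin_mul_apply,
    R.toLin_refl hβ, map_sub, map_smul, R.toLin_cancel_inv, R.coroot_toLin]

lemma neg_root {β : R.V} (hβ : R.isRoot β) : R.isRoot (-β) := by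
  rw [← R.toLin_refl_self hβ]
  exact R.root_inv _ _ hβ

end RootSystemData

namespace RootSystemData

variable {I : Type} [Fintype I] [DecidableEq I] (R : RootSystemData I)

lemma coords_zero {f : I → ℚ} (h : ∑ i, f i • R.α i = 0) : ∀ i, f i = 0 :=
  Fintype.linearIndependent_iff.mp R.indep f h

lemma coords_eq {f g : I → ℚ} (h : ∑ i, f i • R.α i = ∑ i, g i • R.α i) : ∀ i, f i = g i := by
  intro i
  have h0 : ∑ i, (f i - g i) • R.α i = 0 := by
    simp only [sub_smul, Finset.sum_sub_distrib, h, sub_self]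
  have := R.coords_zero h0 i
  linarith

lemma single_coords (m : I) (q : ℚ) : ∑ k, (if k = m then q else 0) • R.α k = q • R.α m := by
  rw [Finset.sum_eq_single m]
  · simp
  · intro b _ hb; simp [hb]
  · intro h; simp at h

lemma pos_simple (i : I) : R.IsPos (R.α i) := by
  refine ⟨R.root_simple i, fun k => if k = i then 1 else 0, Eq.symm ?_⟩
  rw [Finset.sum_eq_single i]
  · simp
  · intro b _ hb; simp [hb]
  · intro h; simp at h

lemma pos_isRoot {β : R.V} (hβ : R.IsPos β) : R.isRoot β := hβ.1

lemma pos_neg_false {β : R.V} (h1 : R.IsPos β) (h2 : R.IsPos (-β)) : False := by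
  obtain ⟨hr, c, hc⟩ := h1
  obtain ⟨_, d, hd⟩ := h2
  have hsum : ∑ i, ((c i : ℚ) + (d i : ℚ)) • R.α i = 0 := by
    simp only [add_smul, Finset.sum_add_distrib, ← hc, ← hd]
    abel
  have hz := R.coords_zero hsum
  have hc0 : ∀ i, (c i : ℚ) = 0 := by
    intro i
    have := hz i
    have h1 : (0:ℚ) ≤ (c i : ℚ) := Nat.cast_nonneg _
    have h2 : (0:ℚ) ≤ (d i : ℚ) := Nat.cast_nonneg _
    linarith
  apply R.root_ne_zero hr
  rw [hc]
  apply Finset.sum_eq_zero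
  intro i _
  rw [hc0 i, zero_smul]

lemma pos_or_neg' {β : R.V} (hβ : R.isRoot β) : R.IsPos β ∨ R.IsPos (-β) := by
  rcases R.pos_or_neg β hβ with ⟨c, hc⟩ | ⟨c, hc⟩
  · exact Or.inl ⟨hβ, c, hc⟩
  · exact Or.inr ⟨R.neg_root hβ, c, hc⟩

lemma pos_of_not_neg {β : R.V} (hβ : R.isRoot β) (h : ¬ R.IsPos (-β)) : R.IsPos β :=
  (R.pos_or_neg' hβ).resolve_right h

lemma neg_of_not_pos {β : R.V} (hβ : R.isRoot β) (h : ¬ R.IsPos β) : R.IsPos (-β) :=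
  (R.pos_or_neg' hβ).resolve_left h

/-- A root which is a positive rational multiple of a root equals it. -/
lemma scale_eq_one {β γ : R.V} (hβ : R.isRoot β) (hγ : R.isRoot γ) {q : ℚ}
    (h : β = q • γ) (hq : 0 < q) : q = 1 := by
  -- q is an integer
  obtain ⟨v, m, hvm⟩ := R.root_gen γ hγ
  have hβ' : R.toLin v⁻¹ β = q • R.α m := by
    rw [h, hvm, map_smul, R.toLin_inv_cancel]
  obtain ⟨z, hz⟩ := R.root_int _ (R.root_inv v⁻¹ β hβ)
  have hq1 : q = (z m : ℚ) := by
    have := R.coords_eq (f := fun k => if k = m then q else 0) (g := fun k => (z k : ℚ))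
      (by rw [R.single_coords, ← hβ', hz]) m
    simpa using this
  -- q⁻¹ is an integer
  obtain ⟨v', m', hvm'⟩ := R.root_gen β hβ
  have hγ' : R.toLin v'⁻¹ γ = q⁻¹ • R.α m' := by
    have : γ = q⁻¹ • β := by rw [h, smul_smul, inv_mul_cancel₀ (ne_of_gt hq), one_smul]
    rw [this, hvm', map_smul, R.toLin_inv_cancel]
  obtain ⟨z', hz'⟩ := R.root_int _ (R.root_inv v'⁻¹ γ hγ)
  have hq2 : q⁻¹ = (z' m' : ℚ) := by
    have := R.coords_eq (f := fun k => if k = m' then q⁻¹ else 0) (g := fun k => (z' k : ℚ))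
      (by rw [R.single_coords, ← hγ', hz']) m'
    simpa using this
  have hmul : (z m : ℚ) * (z' m' : ℚ) = 1 := by
    rw [← hq1, ← hq2, mul_inv_cancel₀ (ne_of_gt hq)]
  have hmulz : z m * z' m' = 1 := by exact_mod_cast hmul
  have : z m = 1 ∨ z m = -1 := Int.isUnit_iff.mp (IsUnit.of_mul_eq_one _ hmulz)
  rcases this with h1 | h1
  · rw [hq1, h1]; norm_num
  · rw [hq1, h1] at hq; norm_num at hq

/-- Key lemma: a positive root made negative by a simple reflection is that simple root. -/
lemma eq_simple_of_neg {β : R.V} (i : I) (hβ : R.IsPos β)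
    (hneg : R.IsPos (-(R.toLin (R.s i) β))) : β = R.α i := by
  obtain ⟨hr, c, hc⟩ := hβ
  obtain ⟨_, d, hd⟩ := hneg
  set m := R.coroot (R.α i) β with hm
  have hs : R.toLin (R.s i) β = β - m • R.α i := R.s_apply i β
  -- β - m α_i + Σ d α = 0
  have hsum : ∑ k, ((c k : ℚ) + (d k : ℚ) - (if k = i then m else 0)) • R.α k = 0 := by
    simp only [sub_smul, add_smul, Finset.sum_sub_distrib, Finset.sum_add_distrib,
      R.single_coords, ← hc, ← hd]
    rw [hs]
    module
  have hz := R.coords_zero hsum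
  have hck : ∀ k, k ≠ i → (c k : ℚ) = 0 := by
    intro k hk
    have := hz k
    rw [if_neg hk] at this
    have h1 : (0:ℚ) ≤ (c k : ℚ) := Nat.cast_nonneg _
    have h2 : (0:ℚ) ≤ (d k : ℚ) := Nat.cast_nonneg _
    linarith
  have hβi : β = ((c i : ℚ)) • R.α i := by
    rw [hc, Finset.sum_eq_single i]
    · intro b _ hb; rw [hck b hb, zero_smul]
    · intro h; simp at h
  have hci : (0:ℚ) < (c i : ℚ) := by
    rcases Nat.eq_zero_or_pos (c i) with h0 | h0
    · exfalso
      apply R.root_ne_zero hr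
      rw [hβi, h0]; simp
    · exact_mod_cast h0
  have := R.scale_eq_one hr (R.root_simple i) hβi hci
  rw [hβi, this, one_smul]

end RootSystemData

namespace RootSystemData

variable {I : Type} [Fintype I] [DecidableEq I] (R : RootSystemData I)

lemma word_reverse (l : List I) : (l.reverse.map R.s).prod = ((l.map R.s).prod)⁻¹ := by
  induction l with
  | nil => simp
  | cons a t ih =>
    rw [List.reverse_cons, List.map_append, List.prod_append, ih]
    simp [mul_inv_rev, R.s_inv]

lemma exists_word (w : R.W) : ∃ l : List I, (l.map R.s).prod = w := by
  let K : Subgroup R.W :=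
    { carrier := {w | ∃ l : List I, (l.map R.s).prod = w}
      one_mem' := ⟨[], rfl⟩
      mul_mem' := by
        rintro a b ⟨la, rfl⟩ ⟨lb, rfl⟩
        exact ⟨la ++ lb, by simp⟩
      inv_mem' := by
        rintro a ⟨l, rfl⟩
        exact ⟨l.reverse, R.word_reverse l⟩ }
  have h1 : Set.range R.s ⊆ (K : Set R.W) := by
    rintro x ⟨i, rfl⟩
    exact ⟨[i], by simp⟩
  have h2 : Subgroup.closure (Set.range R.s) ≤ K := Subgroup.closure_le K |>.mpr h1
  rw [R.gen] at h2
  exact h2 (Subgroup.mem_top w)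

lemma len_set_nonempty (w : R.W) :
    {n | ∃ l : List I, l.length = n ∧ (l.map R.s).prod = w}.Nonempty := by
  obtain ⟨l, hl⟩ := R.exists_word w
  exact ⟨l.length, l, rfl, hl⟩

lemma len_le_word {w : R.W} {l : List I} (hl : (l.map R.s).prod = w) :
    R.len w ≤ l.length :=
  Nat.sInf_le ⟨l, rfl, hl⟩

lemma exists_reduced (w : R.W) :
    ∃ l : List I, l.length = R.len w ∧ (l.map R.s).prod = w :=
  Nat.sInf_mem (R.len_set_nonempty w)

lemma len_one : R.len 1 = 0 :=
  Nat.le_zero.mp (R.len_le_word (l := []) rfl)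

lemma eq_one_of_len_zero {w : R.W} (h : R.len w = 0) : w = 1 := by
  obtain ⟨l, hlen, hprod⟩ := R.exists_reduced w
  rw [h, List.length_eq_zero_iff] at hlen
  rw [hlen] at hprod
  exact hprod.symm

lemma len_mul_le (x y : R.W) : R.len (x * y) ≤ R.len x + R.len y := by
  obtain ⟨lx, hx, hpx⟩ := R.exists_reduced x
  obtain ⟨ly, hy, hpy⟩ := R.exists_reduced y
  have : ((lx ++ ly).map R.s).prod = x * y := by simp [hpx, hpy]
  calc R.len (x * y) ≤ (lx ++ ly).length := R.len_le_word this
    _ = R.len x + R.len y := by simp [hx, hy]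

lemma len_inv (w : R.W) : R.len w⁻¹ = R.len w := by
  have key : ∀ v : R.W, R.len v⁻¹ ≤ R.len v := by
    intro v
    obtain ⟨l, hl, hp⟩ := R.exists_reduced v
    have : (l.reverse.map R.s).prod = v⁻¹ := by rw [R.word_reverse, hp]
    calc R.len v⁻¹ ≤ l.reverse.length := R.len_le_word this
      _ = R.len v := by simp [hl]
  refine le_antisymm (key w) ?_
  have := key w⁻¹
  rwa [inv_inv] at this

lemma len_s_le (i : I) : R.len (R.s i) ≤ 1 :=
  R.len_le_word (l := [i]) (by simp)

lemma len_mul_s_le (w : R.W) (i : I) : R.len (w * R.s i) ≤ R.len w + 1 :=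
  le_trans (R.len_mul_le w (R.s i)) (by have := R.len_s_le i; omega)

lemma len_s_mul_le (w : R.W) (i : I) : R.len (R.s i * w) ≤ R.len w + 1 :=
  le_trans (R.len_mul_le (R.s i) w) (by have := R.len_s_le i; omega)

/-- Exchange property, word form. -/
lemma exchange_word (l : List I) {β : R.V} (hβ : R.IsPos β)
    (hneg : R.IsPos (-(R.toLin ((l.map R.s).prod) β))) :
    ∃ l' : List I, l'.length + 1 = l.length ∧
      (l'.map R.s).prod = (l.map R.s).prod * R.refl β := by
  induction l with
  | nil =>
    exfalso
    simp only [List.map_nil, List.prod_nil, R.toLin_one_apply] at hneg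
    exact R.pos_neg_false hβ hneg
  | cons k t ih =>
    set p : R.W := (t.map R.s).prod with hp
    have hprod : ((k :: t).map R.s).prod = R.s k * p := by simp [hp]
    have hδroot : R.isRoot (R.toLin p β) := R.root_inv p β (R.pos_isRoot hβ)
    rcases R.pos_or_neg' hδroot with hpos | hneg'
    · -- sign flips at this letter: toLin p β = α k
      have h2 : R.IsPos (-(R.toLin (R.s k) (R.toLin p β))) := by
        rw [← R.toLin_mul_apply, ← hprod]
        exact hneg
      have hαk : R.toLin p β = R.α k := R.eq_simple_of_neg k hpos h2
      have hsk : R.s k = p * R.refl β * p⁻¹ := by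
        rw [R.refl_conj (R.pos_isRoot hβ) p, hαk, R.refl_simple]
      refine ⟨t, by simp, ?_⟩
      have hkey : (p * R.refl β * p⁻¹) * p * R.refl β = p := by
        rw [mul_assoc (p * R.refl β) p⁻¹ p, inv_mul_cancel, mul_one, mul_assoc,
          R.refl_mul_refl (R.pos_isRoot hβ), mul_one]
      rw [hprod, hsk, hkey]
    · -- recurse
      have hneg2 : R.IsPos (-(R.toLin p β)) := hneg'
      obtain ⟨l', hl1, hl2⟩ := ih hneg2
      refine ⟨k :: l', by simp [← hl1], ?_⟩
      simp only [List.map_cons, List.prod_cons, hl2, hprod, mul_assoc]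
      rfl

/-- If `w β < 0` for a positive root `β`, then `ℓ(w s_β) < ℓ(w)`. -/
lemma len_lt_of_neg {w : R.W} {β : R.V} (hβ : R.IsPos β)
    (hneg : R.IsPos (-(R.toLin w β))) : R.len (w * R.refl β) < R.len w := by
  obtain ⟨l, hl, hp⟩ := R.exists_reduced w
  rw [← hp] at hneg
  obtain ⟨l', hl1, hl2⟩ := R.exchange_word l hβ hneg
  rw [hp] at hl2
  have := R.len_le_word hl2
  omega

/-- If `w β > 0` for a positive root `β`, then `ℓ(w) < ℓ(w s_β)`. -/
lemma len_lt_of_pos {w : R.W} {β : R.V} (hβ : R.IsPos β)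
    (hpos : R.IsPos (R.toLin w β)) : R.len w < R.len (w * R.refl β) := by
  have hroot := R.pos_isRoot hβ
  have h1 : R.IsPos (-(R.toLin (w * R.refl β) β)) := by
    rw [R.toLin_mul_apply, R.toLin_refl_self hroot, map_neg, neg_neg]
    exact hpos
  have := R.len_lt_of_neg hβ h1
  rwa [mul_assoc, R.refl_mul_refl hroot, mul_one] at this

/-- Left version: `u⁻¹ α_j > 0` implies `ℓ(u) < ℓ(s_j u)`. -/
lemma len_lt_smul_of_pos {u : R.W} {j : I} (hpos : R.IsPos (R.toLin u⁻¹ (R.α j))) :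
    R.len u < R.len (R.s j * u) := by
  have := R.len_lt_of_pos (w := u⁻¹) (R.pos_simple j) hpos
  rw [R.refl_simple] at this
  have he : (u⁻¹ * R.s j)⁻¹ = R.s j * u := by
    rw [mul_inv_rev, R.s_inv, inv_inv]
  rw [← R.len_inv (u⁻¹ * R.s j), he, R.len_inv] at this
  exact this

/-- Left version: `w⁻¹ α_j < 0` implies `ℓ(s_j w) < ℓ(w)`. -/
lemma smul_len_lt_of_neg {w : R.W} {j : I} (hneg : R.IsPos (-(R.toLin w⁻¹ (R.α j)))) :
    R.len (R.s j * w) < R.len w := by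
  have := R.len_lt_of_neg (w := w⁻¹) (R.pos_simple j) hneg
  rw [R.refl_simple] at this
  have he : (w⁻¹ * R.s j)⁻¹ = R.s j * w := by
    rw [mul_inv_rev, R.s_inv, inv_inv]
  rw [← R.len_inv (w⁻¹ * R.s j), he, R.len_inv] at this
  exact this

end RootSystemData

namespace RootSystemData

open Classical in
/-- The inversion set of `w`: positive roots sent to negative roots by `w`. -/
noncomputable def inversions {I : Type} [Fintype I] [DecidableEq I] (R : RootSystemData I)
    (w : R.W) : Finset R.V :=
  R.posFinset.filter (fun γ => R.IsPos (-(R.toLin w γ)))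

variable {I : Type} [Fintype I] [DecidableEq I] (R : RootSystemData I)

lemma mem_posFinset {γ : R.V} : γ ∈ R.posFinset ↔ R.IsPos γ := by
  rw [posFinset, Set.Finite.mem_toFinset]
  rfl

lemma mem_inversions {w : R.W} {γ : R.V} :
    γ ∈ R.inversions w ↔ R.IsPos γ ∧ R.IsPos (-(R.toLin w γ)) := by
  classical
  rw [inversions, Finset.mem_filter, R.mem_posFinset]

/-- Crystallographic integrality of coroot pairings. -/
lemma coroot_int {β δ : R.V} (hβ : R.isRoot β) (hδ : R.isRoot δ) :
    ∃ z : ℤ, R.coroot β δ = (z : ℚ) := by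
  obtain ⟨v, m, hvm⟩ := R.root_gen β hβ
  have h1 : R.coroot β δ = R.coroot (R.α m) (R.toLin v⁻¹ δ) := by
    rw [hvm, R.coroot_toLin]
  set δ' := R.toLin v⁻¹ δ with hδ'
  have hδ'root : R.isRoot δ' := R.root_inv v⁻¹ δ hδ
  set c := R.coroot (R.α m) δ' with hc
  have hs : R.toLin (R.s m) δ' = δ' - c • R.α m := R.s_apply m δ'
  obtain ⟨z, hz⟩ := R.root_int δ' hδ'root
  obtain ⟨z', hz'⟩ := R.root_int _ (R.root_inv (R.s m) δ' hδ'root)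
  have hdiff : ∑ k, ((z k : ℚ) - (z' k : ℚ)) • R.α k = ∑ k, (if k = m then c else 0) • R.α k := by
    rw [R.single_coords]
    simp only [sub_smul, Finset.sum_sub_distrib, ← hz, ← hz']
    rw [hs]
    module
  have hthis : (z m : ℚ) - (z' m : ℚ) = c := by simpa using R.coords_eq hdiff m
  refine ⟨z m - z' m, ?_⟩
  rw [h1, ← hthis]
  push_cast
  ring

/-- `s_i` preserves positivity of positive roots other than `α_i`. -/
lemma s_pos_of_ne {γ : R.V} (i : I) (hγ : R.IsPos γ) (hne : γ ≠ R.α i) :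
    R.IsPos (R.toLin (R.s i) γ) := by
  apply R.pos_of_not_neg (R.root_inv _ _ (R.pos_isRoot hγ))
  intro h
  exact hne (R.eq_simple_of_neg i hγ h)

lemma inversions_mul_s {w : R.W} {i : I} (hneg : R.IsPos (-(R.toLin w (R.α i)))) :
    (R.inversions (w * R.s i)).card + 1 = (R.inversions w).card := by
  classical
  have hwαroot : R.isRoot (R.toLin w (R.α i)) := R.root_inv _ _ (R.root_simple i)
  have hset : R.inversions (w * R.s i)
      = ((R.inversions w).erase (R.α i)).image (R.toLin (R.s i)) := by
    ext γ
    rw [R.mem_inversions, Finset.mem_image]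
    constructor
    · rintro ⟨hγpos, hγneg⟩
      have hγα : γ ≠ R.α i := by
        rintro rfl
        rw [R.toLin_mul_apply, R.s_apply_self, map_neg, neg_neg] at hγneg
        exact R.pos_neg_false hγneg hneg
      refine ⟨R.toLin (R.s i) γ, ?_, R.s_s_apply i γ⟩
      rw [Finset.mem_erase, R.mem_inversions]
      refine ⟨?_, R.s_pos_of_ne i hγpos hγα, ?_⟩
      · intro h
        apply R.pos_neg_false hγpos
        have : γ = R.toLin (R.s i) (R.α i) := by rw [← h, R.s_s_apply]
        rw [this, R.s_apply_self]
        simpa using R.pos_simple i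
      · rw [← R.toLin_mul_apply]
        exact hγneg
    · rintro ⟨δ, hδ, rfl⟩
      rw [Finset.mem_erase, R.mem_inversions] at hδ
      obtain ⟨hδα, hδpos, hδneg⟩ := hδ
      refine ⟨R.s_pos_of_ne i hδpos hδα, ?_⟩
      rw [R.toLin_mul_apply, R.s_s_apply]
      exact hδneg
  have hαmem : R.α i ∈ R.inversions w := R.mem_inversions.mpr ⟨R.pos_simple i, hneg⟩
  rw [hset, Finset.card_image_of_injective _ (R.toLin_injective (R.s i)),
    Finset.card_erase_add_one hαmem]

lemma exists_descent {w : R.W} (hw : w ≠ 1) : ∃ i, R.len (w * R.s i) < R.len w := by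
  obtain ⟨l, hl, hp⟩ := R.exists_reduced w
  rcases List.eq_nil_or_concat l with rfl | ⟨t, i, rfl⟩
  · exact absurd hp.symm hw
  · refine ⟨i, ?_⟩
    have hws : w * R.s i = (t.map R.s).prod := by
      rw [← hp]
      simp [List.concat_eq_append, mul_assoc, R.s_mul_s]
    have h1 := R.len_le_word hws.symm
    have h2 : t.length + 1 = R.len w := by
      rw [← hl, List.concat_eq_append]; simp
    omega

lemma len_le_card_inversions (w : R.W) : R.len w ≤ (R.inversions w).card := by
  have H : ∀ n w, R.len w = n → R.len w ≤ (R.inversions w).card := by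
    intro n
    induction n using Nat.strong_induction_on with
    | _ n ih =>
      intro w hw
      rcases Nat.eq_zero_or_pos n with rfl | hn
      · omega
      · have hw1 : w ≠ 1 := by
          intro h; rw [h, R.len_one] at hw; omega
        obtain ⟨i, hi⟩ := R.exists_descent hw1
        have hwα : R.IsPos (-(R.toLin w (R.α i))) := by
          apply R.neg_of_not_pos (R.root_inv _ _ (R.root_simple i))
          intro hpos
          have := R.len_lt_of_pos (R.pos_simple i) hpos
          rw [R.refl_simple] at this
          omega
        have hcard := R.inversions_mul_s hwα
        have hlt : R.len (w * R.s i) < n := by omega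
        have := ih _ hlt (w * R.s i) rfl
        have hback : R.len w ≤ R.len (w * R.s i) + 1 := by
          have h1 : w = (w * R.s i) * R.s i := by
            rw [mul_assoc, R.s_mul_s, mul_one]
          calc R.len w = R.len ((w * R.s i) * R.s i) := by rw [← h1]
            _ ≤ R.len (w * R.s i) + 1 := R.len_mul_s_le _ i
        omega
  exact H (R.len w) w rfl

/-- For `γ` an inversion of `s_β`, the pairing `⟨γ, β∨⟩ ≥ 1`. -/
lemma coroot_ge_one_of_inversion {β γ : R.V} (hβ : R.IsPos β)
    (hγ : γ ∈ R.inversions (R.refl β)) : 1 ≤ R.coroot β γ := by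
  rw [R.mem_inversions] at hγ
  obtain ⟨hγpos, hγneg⟩ := hγ
  set c := R.coroot β γ with hc
  -- positivity of c
  obtain ⟨hγr, g, hg⟩ := hγpos
  obtain ⟨_, d, hd⟩ := hγneg
  obtain ⟨hβr, b, hb⟩ := hβ
  have hkey : ∑ k, ((g k : ℚ) + (d k : ℚ)) • R.α k = ∑ k, (c * (b k : ℚ)) • R.α k := by
    have h1 : γ - R.toLin (R.refl β) γ = c • β := by
      rw [R.toLin_refl hβr]; module
    calc ∑ k, ((g k : ℚ) + (d k : ℚ)) • R.α k
        = γ + -(R.toLin (R.refl β) γ) := by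
          simp only [add_smul, Finset.sum_add_distrib, ← hg, ← hd]
      _ = c • β := by rw [← h1]; abel
      _ = ∑ k, (c * (b k : ℚ)) • R.α k := by
          rw [hb, Finset.smul_sum]
          simp [smul_smul]
  have hcoords := R.coords_eq hkey
  have hcpos : 0 < c := by
    by_contra hle
    push_neg at hle
    have hgz : ∀ k, (g k : ℚ) = 0 := by
      intro k
      have h1 := hcoords k
      have h2 : c * (b k : ℚ) ≤ 0 :=
        mul_nonpos_of_nonpos_of_nonneg hle (Nat.cast_nonneg _)
      have h3 : (0:ℚ) ≤ (g k : ℚ) := Nat.cast_nonneg _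
      have h4 : (0:ℚ) ≤ (d k : ℚ) := Nat.cast_nonneg _
      linarith
    apply R.root_ne_zero hγr
    rw [hg]
    apply Finset.sum_eq_zero
    intro k _
    rw [hgz k, zero_smul]
  obtain ⟨z, hz⟩ := R.coroot_int hβr hγr
  rw [← hc] at hz
  rw [hz] at hcpos ⊢
  have : (1:ℤ) ≤ z := by exact_mod_cast hcpos
  exact_mod_cast this

lemma refl_mem_inversions {β : R.V} (hβ : R.IsPos β) : β ∈ R.inversions (R.refl β) := by
  rw [R.mem_inversions, R.toLin_refl_self (R.pos_isRoot hβ), neg_neg]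
  exact ⟨hβ, hβ⟩

/-- The sum of all coroot pairings over positive roots equals twice the pairing with ρ. -/
lemma sum_coroot_pos (β : R.V) : ∑ γ ∈ R.posFinset, R.coroot β γ = 2 * R.coroot β R.ρ := by
  rw [ρ, R.coroot_smul_right, R.coroot_sum]
  ring

/-- Bound: `|Inv(s_β)| ≤ 2⟨ρ, β∨⟩ - 1`. -/
lemma card_inversions_refl_le {β : R.V} (hβ : R.IsPos β) :
    ((R.inversions (R.refl β)).card : ℚ) ≤ 2 * R.coroot β R.ρ - 1 := by
  classical
  have hβr := R.pos_isRoot hβ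
  set S := R.inversions (R.refl β) with hS
  set T := R.posFinset.filter (fun γ => ¬ R.IsPos (-(R.toLin (R.refl β) γ))) with hT
  have hsplit : ∑ γ ∈ S, R.coroot β γ + ∑ γ ∈ T, R.coroot β γ
      = ∑ γ ∈ R.posFinset, R.coroot β γ :=
    Finset.sum_filter_add_sum_filter_not R.posFinset _ _
  have hTzero : ∑ γ ∈ T, R.coroot β γ = 0 := by
    apply Finset.sum_involution (fun γ _ => R.toLin (R.refl β) γ)
    · intro γ hγ
      rw [hT, Finset.mem_filter, R.mem_posFinset] at hγ
      have h1 : R.toLin (R.refl β) γ = γ - R.coroot β γ • β := R.toLin_refl hβr γ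
      rw [h1, R.coroot_sub_right, R.coroot_smul_right, R.coroot_self hβr]
      ring
    · intro γ hγ hne
      rw [hT, Finset.mem_filter, R.mem_posFinset] at hγ
      intro heq
      have h1 : R.toLin (R.refl β) γ = γ - R.coroot β γ • β := R.toLin_refl hβr γ
      rw [h1] at heq
      have : R.coroot β γ • β = 0 := by
        have := sub_eq_self.mp heq
        linear_combination (norm := module) this
      rcases smul_eq_zero.mp this with h | h
      · exact hne h
      · exact R.root_ne_zero hβr h
    · intro γ hγ
      rw [hT, Finset.mem_filter, R.mem_posFinset] at hγ
      obtain ⟨hγpos, hγnotneg⟩ := hγ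
      have hsb : R.IsPos (R.toLin (R.refl β) γ) :=
        R.pos_of_not_neg (R.root_inv _ _ (R.pos_isRoot hγpos)) hγnotneg
      rw [hT, Finset.mem_filter, R.mem_posFinset]
      refine ⟨hsb, ?_⟩
      rw [R.refl_refl_apply hβr]
      intro h
      exact R.pos_neg_false hγpos h
    · intro γ hγ
      exact R.refl_refl_apply hβr γ
  have hβS : β ∈ S := R.refl_mem_inversions hβ
  have hSsum : ∑ γ ∈ S, R.coroot β γ = 2 + ∑ γ ∈ S.erase β, R.coroot β γ := by
    rw [← Finset.add_sum_erase S _ hβS, R.coroot_self hβr]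
  have hlower : ((S.erase β).card : ℚ) ≤ ∑ γ ∈ S.erase β, R.coroot β γ := by
    have := Finset.card_nsmul_le_sum (S.erase β) (fun γ => R.coroot β γ) 1
      (fun γ hγ => R.coroot_ge_one_of_inversion hβ (Finset.mem_of_mem_erase hγ))
    simpa using this
  have hcard : ((S.erase β).card : ℚ) = (S.card : ℚ) - 1 := by
    have := Finset.card_erase_add_one hβS
    push_cast [← this]
    ring
  have hfinal := R.sum_coroot_pos β
  rw [← hsplit, hTzero, add_zero, hSsum] at hfinal
  rw [hcard] at hlower
  linarith

end RootSystemData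

/-- Diamond lemma for the quantum Bruhat graph, part (1). -/
theorem stmt6 {I : Type} [Fintype I] [DecidableEq I] (R : RootSystemData I)
    (u w : R.W) (β : R.V) (hβ : R.IsPos β)
    (hw : w = u * R.refl β) (hedge : R.QBGEdge u β) (j : I)
    (hneg : R.IsPos (-(R.toLin w⁻¹ (R.α j))))
    (hpos : R.IsPos (R.toLin u⁻¹ (R.α j))) :
    R.BruhatEdge u β ∧ β = R.toLin u⁻¹ (R.α j) ∧ w = R.s j * u := by
  have hβr : R.isRoot β := hβ.1
  have hsu : R.len u < R.len (R.s j * u) := R.len_lt_smul_of_pos hpos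
  have hsw : R.len (R.s j * w) < R.len w := R.smul_len_lt_of_neg hneg
  have hsju_le : R.len (R.s j * u) ≤ R.len u + 1 := R.len_s_mul_le u j
  have hfact : R.s j * u = (R.s j * w) * R.refl β := by
    rw [hw, mul_assoc, mul_assoc, R.refl_mul_refl hβr, mul_one]
  rcases hedge with hbr | hq
  · -- Bruhat case
    have hlen : R.len (u * R.refl β) = R.len u + 1 := hbr.2
    have hlw : R.len w = R.len u + 1 := by rw [hw]; exact hlen
    have h1 : (R.s j * u) * R.refl β = R.s j * w := by rw [hw, mul_assoc]
    have hlt : R.len ((R.s j * u) * R.refl β) < R.len (R.s j * u) := by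
      rw [h1]; omega
    have hneg2 : R.IsPos (-(R.toLin (R.s j * u) β)) := by
      apply R.neg_of_not_pos (R.root_inv _ _ hβr)
      intro hposβ
      have := R.len_lt_of_pos hβ hposβ
      omega
    have hposu : R.IsPos (R.toLin u β) := by
      apply R.pos_of_not_neg (R.root_inv _ _ hβr)
      intro hnegβ
      have := R.len_lt_of_neg hβ hnegβ
      omega
    have huβ : R.toLin u β = R.α j := by
      apply R.eq_simple_of_neg j hposu
      rw [R.toLin_mul_apply] at hneg2
      exact hneg2
    have hconj : u * R.refl β * u⁻¹ = R.s j := by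
      rw [R.refl_conj hβr u, huβ, R.refl_simple]
    have hw2 : w = R.s j * u := by
      rw [hw, ← hconj, mul_assoc, inv_mul_cancel, mul_one]
    have hβeq : β = R.toLin u⁻¹ (R.α j) := by
      rw [← huβ, R.toLin_inv_cancel]
    exact ⟨hbr, hβeq, hw2⟩
  · -- Quantum case: contradiction
    exfalso
    have hq2 : (R.len (u * R.refl β) : ℚ) = R.len u + 1 - 2 * R.coroot β R.ρ := hq.2
    have h1 : R.len (R.s j * u) ≤ R.len (R.s j * w) + R.len (R.refl β) := by
      rw [hfact]; exact R.len_mul_le _ _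
    have h2 : (R.len (R.refl β) : ℚ) ≤ 2 * R.coroot β R.ρ - 1 := by
      calc (R.len (R.refl β) : ℚ) ≤ ((R.inversions (R.refl β)).card : ℚ) := by
            exact_mod_cast R.len_le_card_inversions (R.refl β)
        _ ≤ 2 * R.coroot β R.ρ - 1 := R.card_inversions_refl_le hβ
    have hwu : R.len w = R.len (u * R.refl β) := by rw [hw]
    have c4 : (R.len w : ℚ) = R.len u + 1 - 2 * R.coroot β R.ρ := by rw [hwu]; exact hq2
    have c1' : (R.len u : ℚ) + 1 ≤ R.len (R.s j * u) := by exact_mod_cast hsu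
    have c2' : (R.len (R.s j * w) : ℚ) + 1 ≤ R.len w := by exact_mod_cast hsw
    have c3 : (R.len (R.s j * u) : ℚ) ≤ R.len (R.s j * w) + R.len (R.refl β) := by
      exact_mod_cast h1
    linarith
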